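/- Let p, q ≥ 1, n = p + q, and J = diag(−I_p, I_q) ∈ M_n(ℂ). The Cayley transform C(Z) = (Z − iJ)(Z + iJ)⁻¹ is a bijection from the set {Z ∈ M_n(ℂ) : (Z − Z*)/(2i) is positive definite and Z + iJ is invertible} onto the set {γ ∈ M_n(ℂ) : J − γ*Jγ is positive definite}; its inverse is γ ↦ i(I − γ)⁻¹(I + γ)J (for every γ with J − γ*Jγ positive definite, I − γ is invertible). -/

import Mathlib

open Matrix ComplexOrder

section Aux

variable {ι : Type*} [Fintype ι] [DecidableEq ι]

private lemma auxSmulPosDef {c : ℂ} (hc : 0 < c) {A : Matrix (Fin p ⊕ Fin q) (Fin p ⊕ Fin q) ℂ} (hA : A.PosDef) :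
    (c • A).PosDef := by
  have him : c.im = 0 := by have := (Complex.lt_def.mp hc).2; simpa using this.symm
  have hstar : star c = c := by
    rw [Complex.star_def, Complex.conj_eq_iff_im]; exact him
  refine Matrix.PosDef.of_dotProduct_mulVec_pos (by rw [Matrix.IsHermitian, conjTranspose_smul, hstar, hA.1]) fun x hx => ?_
  rw [smul_mulVec, dotProduct_smul, smul_eq_mul]
  exact mul_pos hc (hA.dotProduct_mulVec_pos hx)

private lemma auxConjPosDef {A B : Matrix (Fin p ⊕ Fin q) (Fin p ⊕ Fin q) ℂ} (hA : A.PosDef) (hB : IsUnit B) :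
    (Bᴴ * A * B).PosDef := by
  refine Matrix.PosDef.of_dotProduct_mulVec_pos (isHermitian_conjTranspose_mul_mul B hA.1) fun x hx => ?_
  have h1 : B *ᵥ x ≠ 0 := fun h => hx <| Matrix.mulVec_injective_iff_isUnit.2 hB
    (by simpa using h)
  simpa only [star_mulVec, dotProduct_mulVec, vecMul_vecMul] using hA.dotProduct_mulVec_pos h1

end Aux

/-- The Cayley transform `C(Z) = (Z − iJ)(Z + iJ)⁻¹`, with `J = diag(−I_p, I_q)`, is a
bijection from `{Z : Im Z ≫ 0 and Z + iJ invertible}` (the tube domain minus the singular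
set) onto the strict `J`-contractions `{γ : J − γ*Jγ ≫ 0}`; for every strict
`J`-contraction `γ`, `I − γ` is invertible and the inverse map is
`γ ↦ i (I − γ)⁻¹ (I + γ) J`. -/
theorem cayley_transform_semigroup (p q : ℕ) (hp : 1 ≤ p) (hq : 1 ≤ q)
    (J : Matrix (Fin p ⊕ Fin q) (Fin p ⊕ Fin q) ℂ)
    (hJ : J = Matrix.fromBlocks (-1) 0 0 1) :
    Set.BijOn (fun Z => (Z - Complex.I • J) * (Z + Complex.I • J)⁻¹)
      {Z : Matrix (Fin p ⊕ Fin q) (Fin p ⊕ Fin q) ℂ |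
        ((2 * Complex.I)⁻¹ • (Z - Zᴴ)).PosDef ∧ IsUnit (Z + Complex.I • J)}
      {γ : Matrix (Fin p ⊕ Fin q) (Fin p ⊕ Fin q) ℂ | (J - γᴴ * J * γ).PosDef} ∧
    (∀ γ : Matrix (Fin p ⊕ Fin q) (Fin p ⊕ Fin q) ℂ,
      (J - γᴴ * J * γ).PosDef → IsUnit (1 - γ)) ∧
    Set.InvOn (fun γ => Complex.I • ((1 - γ)⁻¹ * (1 + γ) * J))
      (fun Z => (Z - Complex.I • J) * (Z + Complex.I • J)⁻¹)
      {Z : Matrix (Fin p ⊕ Fin q) (Fin p ⊕ Fin q) ℂ |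
        ((2 * Complex.I)⁻¹ • (Z - Zᴴ)).PosDef ∧ IsUnit (Z + Complex.I • J)}
      {γ : Matrix (Fin p ⊕ Fin q) (Fin p ⊕ Fin q) ℂ | (J - γᴴ * J * γ).PosDef} := by
  -- basic facts about J
  have hJH : Jᴴ = J := by
    rw [hJ, Matrix.fromBlocks_conjTranspose]; simp
  have hJ2 : J * J = 1 := by
    rw [hJ, Matrix.fromBlocks_multiply]; simp
  have hJ2' : ∀ X : Matrix (Fin p ⊕ Fin q) (Fin p ⊕ Fin q) ℂ, J * (J * X) = X := fun X => by
    rw [← Matrix.mul_assoc, hJ2, Matrix.one_mul]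
  have h2I0 : (2 * Complex.I) ≠ 0 := by simp [Complex.I_ne_zero]
  have h40 : (4 : ℂ) ≠ 0 := by norm_num
  have h4 : (0 : ℂ) < 4 := by rw [Complex.lt_def]; norm_num
  have h4inv : (0 : ℂ) < (4 : ℂ)⁻¹ := by
    rw [show ((4:ℂ))⁻¹ = (((4:ℝ)⁻¹ : ℝ) : ℂ) by push_cast; norm_num]
    rw [Complex.lt_def]; norm_num
  -- key algebraic identity
  have key : ∀ Z : Matrix (Fin p ⊕ Fin q) (Fin p ⊕ Fin q) ℂ,
      (Z + Complex.I • J)ᴴ * J * (Z + Complex.I • J)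
        - (Z - Complex.I • J)ᴴ * J * (Z - Complex.I • J)
        = (2 * Complex.I) • (Zᴴ - Z) := by
    intro Z
    simp only [conjTranspose_add, conjTranspose_sub, conjTranspose_smul, Complex.star_def,
      Complex.conj_I, hJH, neg_smul, Matrix.add_mul, Matrix.mul_add, Matrix.sub_mul,
      Matrix.mul_sub, smul_mul_assoc, mul_smul_comm, smul_smul, Complex.I_mul_I,
      Matrix.mul_assoc, hJ2', hJ2, neg_neg, one_smul, neg_mul, mul_neg,
      Matrix.mul_one, Matrix.one_mul]
    module
  have hMM : ∀ Z : Matrix (Fin p ⊕ Fin q) (Fin p ⊕ Fin q) ℂ,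
      (4 : ℂ) • ((2 * Complex.I)⁻¹ • (Z - Zᴴ)) = (2 * Complex.I) • (Zᴴ - Z) := by
    intro Z
    rw [smul_smul, show (4:ℂ) * (2 * Complex.I)⁻¹ = -(2 * Complex.I) by
      field_simp; ring_nf; simp [Complex.I_sq]]
    rw [neg_smul, ← smul_neg, neg_sub]
  -- the congruence identity
  have hcong : ∀ Z : Matrix (Fin p ⊕ Fin q) (Fin p ⊕ Fin q) ℂ, IsUnit (Z + Complex.I • J) →
      (Z + Complex.I • J)ᴴ *
        (J - ((Z - Complex.I • J) * (Z + Complex.I • J)⁻¹)ᴴ * J *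
          ((Z - Complex.I • J) * (Z + Complex.I • J)⁻¹)) * (Z + Complex.I • J)
        = (2 * Complex.I) • (Zᴴ - Z) := by
    intro Z hW
    have hWd := (Matrix.isUnit_iff_isUnit_det _).mp hW
    have h1 : (Z + Complex.I • J)⁻¹ * (Z + Complex.I • J) = 1 :=
      Matrix.nonsing_inv_mul _ hWd
    have e1 : (Z + Complex.I • J)ᴴ *
        (((Z - Complex.I • J) * (Z + Complex.I • J)⁻¹)ᴴ * J *
          ((Z - Complex.I • J) * (Z + Complex.I • J)⁻¹)) * (Z + Complex.I • J)
        = (Z - Complex.I • J)ᴴ * J * (Z - Complex.I • J) := by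
      simp only [conjTranspose_mul, Matrix.mul_assoc, h1, Matrix.mul_one]
      rw [← Matrix.mul_assoc, ← conjTranspose_mul, h1, conjTranspose_one, Matrix.one_mul]
    rw [Matrix.mul_sub, Matrix.sub_mul, e1, ← key Z]
  -- forward maps-to
  have hFwd : ∀ Z : Matrix (Fin p ⊕ Fin q) (Fin p ⊕ Fin q) ℂ,
      (((2 * Complex.I)⁻¹ • (Z - Zᴴ)).PosDef ∧ IsUnit (Z + Complex.I • J)) →
      (J - ((Z - Complex.I • J) * (Z + Complex.I • J)⁻¹)ᴴ * J *
        ((Z - Complex.I • J) * (Z + Complex.I • J)⁻¹)).PosDef := by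
    rintro Z ⟨hM, hW⟩
    have hWd := (Matrix.isUnit_iff_isUnit_det _).mp hW
    have h1 : (Z + Complex.I • J)⁻¹ * (Z + Complex.I • J) = 1 :=
      Matrix.nonsing_inv_mul _ hWd
    have h2 : (Z + Complex.I • J) * (Z + Complex.I • J)⁻¹ = 1 :=
      Matrix.mul_nonsing_inv _ hWd
    have hWinv : IsUnit (Z + Complex.I • J)⁻¹ := ⟨⟨_, _, h1, h2⟩, rfl⟩
    have hEq : J - ((Z - Complex.I • J) * (Z + Complex.I • J)⁻¹)ᴴ * J *
        ((Z - Complex.I • J) * (Z + Complex.I • J)⁻¹)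
        = ((Z + Complex.I • J)⁻¹)ᴴ * ((4 : ℂ) • ((2 * Complex.I)⁻¹ • (Z - Zᴴ))) *
          (Z + Complex.I • J)⁻¹ := by
      rw [hMM Z, ← hcong Z hW]
      simp only [Matrix.mul_assoc, h2, Matrix.mul_one]
      rw [← Matrix.mul_assoc ((Z + Complex.I • J)⁻¹)ᴴ (Z + Complex.I • J)ᴴ,
        ← conjTranspose_mul, h2, conjTranspose_one, Matrix.one_mul]
    rw [hEq]
    exact auxConjPosDef (auxSmulPosDef h4 hM) hWinv
  -- invertibility of 1 - γ
  have hUnit : ∀ γ : Matrix (Fin p ⊕ Fin q) (Fin p ⊕ Fin q) ℂ, (J - γᴴ * J * γ).PosDef → IsUnit (1 - γ) := by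
    intro γ hγ
    rw [Matrix.isUnit_iff_isUnit_det, isUnit_iff_ne_zero]
    intro hdet
    obtain ⟨v, hv0, hv⟩ := Matrix.exists_mulVec_eq_zero_iff.mpr hdet
    have hγv : γ *ᵥ v = v := by
      rwa [Matrix.sub_mulVec, Matrix.one_mulVec, sub_eq_zero, eq_comm] at hv
    have h2 : star v ⬝ᵥ (J - γᴴ * J * γ) *ᵥ v = 0 := by
      rw [Matrix.sub_mulVec, dotProduct_sub, ← Matrix.mulVec_mulVec, hγv,
        ← Matrix.mulVec_mulVec, dotProduct_mulVec (star v) γᴴ, ← star_mulVec, hγv,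
        sub_self]
    exact absurd h2 (hγ.dotProduct_mulVec_pos hv0).ne'
  -- facts on the inverse side
  have hRight : ∀ γ : Matrix (Fin p ⊕ Fin q) (Fin p ⊕ Fin q) ℂ, (J - γᴴ * J * γ).PosDef →
      (Complex.I • ((1 - γ)⁻¹ * (1 + γ) * J) - Complex.I • J)
        * (Complex.I • ((1 - γ)⁻¹ * (1 + γ) * J) + Complex.I • J)⁻¹ = γ ∧
      (((2 * Complex.I)⁻¹ • (Complex.I • ((1 - γ)⁻¹ * (1 + γ) * J)
          - (Complex.I • ((1 - γ)⁻¹ * (1 + γ) * J))ᴴ)).PosDef ∧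
        IsUnit (Complex.I • ((1 - γ)⁻¹ * (1 + γ) * J) + Complex.I • J)) := by
    intro γ hγ
    have hu : IsUnit (1 - γ) := hUnit γ hγ
    have hud := (Matrix.isUnit_iff_isUnit_det _).mp hu
    have hu1 : (1 - γ)⁻¹ * (1 - γ) = 1 := Matrix.nonsing_inv_mul _ hud
    have hu2 : (1 - γ) * (1 - γ)⁻¹ = 1 := Matrix.mul_nonsing_inv _ hud
    set Z := Complex.I • ((1 - γ)⁻¹ * (1 + γ) * J) with hZdef
    have hZp : Z + Complex.I • J = (2 * Complex.I) • ((1 - γ)⁻¹ * J) := by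
      apply hu.mul_left_cancel
      rw [hZdef]
      simp only [Matrix.mul_add, mul_smul_comm, ← Matrix.mul_assoc, hu2, Matrix.one_mul]
      simp only [Matrix.add_mul, Matrix.sub_mul, Matrix.one_mul]
      module
    have hZm : Z - Complex.I • J = (2 * Complex.I) • ((1 - γ)⁻¹ * (γ * J)) := by
      apply hu.mul_left_cancel
      rw [hZdef]
      simp only [Matrix.mul_sub, mul_smul_comm, ← Matrix.mul_assoc, hu2, Matrix.one_mul]
      simp only [Matrix.add_mul, Matrix.sub_mul, Matrix.one_mul]
      module
    have hr : (Z + Complex.I • J) * ((2 * Complex.I)⁻¹ • (J * (1 - γ))) = 1 := by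
      rw [hZp, smul_mul_smul_comm, mul_inv_cancel₀ h2I0, one_smul]
      simp only [Matrix.mul_assoc, hJ2']
      exact hu1
    have hl : ((2 * Complex.I)⁻¹ • (J * (1 - γ))) * (Z + Complex.I • J) = 1 :=
      mul_eq_one_comm.mp hr
    have hWu : IsUnit (Z + Complex.I • J) := ⟨⟨_, _, hr, hl⟩, rfl⟩
    have hWinv : (Z + Complex.I • J)⁻¹ = (2 * Complex.I)⁻¹ • (J * (1 - γ)) :=
      Matrix.inv_eq_right_inv hr
    have hcomm : γ * (1 - γ) = (1 - γ) * γ := by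
      simp [Matrix.mul_sub, Matrix.sub_mul]
    have hCZ : (Z - Complex.I • J) * (Z + Complex.I • J)⁻¹ = γ := by
      rw [hWinv, hZm, smul_mul_smul_comm, mul_inv_cancel₀ h2I0, one_smul]
      simp only [Matrix.mul_assoc, hJ2']
      rw [hcomm, ← Matrix.mul_assoc, hu1, Matrix.one_mul]
    refine ⟨hCZ, ?_, hWu⟩
    -- positivity of the imaginary part
    have hc := hcong Z hWu
    rw [hCZ] at hc
    have key2 : (2 * Complex.I)⁻¹ • (Z - Zᴴ)
        = (4 : ℂ)⁻¹ • ((Z + Complex.I • J)ᴴ * (J - γᴴ * J * γ) * (Z + Complex.I • J)) := by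
      rw [hc, ← hMM Z, smul_smul, inv_mul_cancel₀ h40, one_smul]
    rw [key2]
    exact auxSmulPosDef h4inv (auxConjPosDef hγ hWu)
  -- left inverse
  have hLeft : ∀ Z : Matrix (Fin p ⊕ Fin q) (Fin p ⊕ Fin q) ℂ,
      (((2 * Complex.I)⁻¹ • (Z - Zᴴ)).PosDef ∧ IsUnit (Z + Complex.I • J)) →
      Complex.I • ((1 - (Z - Complex.I • J) * (Z + Complex.I • J)⁻¹)⁻¹ *
        (1 + (Z - Complex.I • J) * (Z + Complex.I • J)⁻¹) * J) = Z := by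
    intro Z hZ
    obtain ⟨hM, hW⟩ := hZ
    have hWd := (Matrix.isUnit_iff_isUnit_det _).mp hW
    have h1 : (Z + Complex.I • J)⁻¹ * (Z + Complex.I • J) = 1 :=
      Matrix.nonsing_inv_mul _ hWd
    set γ := (Z - Complex.I • J) * (Z + Complex.I • J)⁻¹ with hγdef
    have hu : IsUnit (1 - γ) := hUnit γ (hFwd Z ⟨hM, hW⟩)
    have hud := (Matrix.isUnit_iff_isUnit_det _).mp hu
    have hu2 : (1 - γ) * (1 - γ)⁻¹ = 1 := Matrix.mul_nonsing_inv _ hud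
    have hγW : γ * (Z + Complex.I • J) = Z - Complex.I • J := by
      rw [hγdef, Matrix.mul_assoc, h1, Matrix.mul_one]
    have hγZ : γ * Z = Z - Complex.I • J - Complex.I • (γ * J) := by
      rw [eq_sub_iff_add_eq]
      rw [Matrix.mul_add, mul_smul_comm] at hγW
      exact hγW
    apply hu.mul_left_cancel
    simp only [mul_smul_comm, ← Matrix.mul_assoc, hu2, Matrix.one_mul]
    rw [Matrix.sub_mul (1 : Matrix (Fin p ⊕ Fin q) (Fin p ⊕ Fin q) ℂ) γ Z, Matrix.one_mul, hγZ]
    simp only [Matrix.add_mul, Matrix.one_mul]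
    module
  refine ⟨?_, hUnit, fun Z hZ => hLeft Z hZ, fun γ hγ => (hRight γ hγ).1⟩
  have hInv : Set.InvOn (fun γ => Complex.I • ((1 - γ)⁻¹ * (1 + γ) * J))
      (fun Z => (Z - Complex.I • J) * (Z + Complex.I • J)⁻¹)
      {Z : Matrix (Fin p ⊕ Fin q) (Fin p ⊕ Fin q) ℂ |
        ((2 * Complex.I)⁻¹ • (Z - Zᴴ)).PosDef ∧ IsUnit (Z + Complex.I • J)}
      {γ : Matrix (Fin p ⊕ Fin q) (Fin p ⊕ Fin q) ℂ | (J - γᴴ * J * γ).PosDef} :=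
    ⟨fun Z hZ => hLeft Z hZ, fun γ hγ => (hRight γ hγ).1⟩
  exact hInv.bijOn (fun Z hZ => hFwd Z hZ) (fun γ hγ => (hRight γ hγ).2)
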